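/- Let f : [a,b] → ℝ be a convex function on [a,b], and let x ∈ (a,b) be a point at which f is differentiable. Then (b−a)·((a+b)/2 − x)·f′(x) ≤ (x−a)·f(a) + (b−x)·f(b) − ∫_a^b f(t) dt. -/

import Mathlib

open MeasureTheory Set intervalIntegral

/-- If `f` lies below the chord on `[u,v]` and is interval integrable, then its integral
is at most the trapezoid value `(v-u)(f u + f v)/2`. -/
lemma integral_le_trapezoid_aux (f : ℝ → ℝ) (u v : ℝ) (huv : u < v)
    (hchord : ∀ t ∈ Set.Icc u v, f t ≤ ((v - t) * f u + (t - u) * f v) / (v - u))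
    (hint : IntervalIntegrable f volume u v) :
    ∫ t in u..v, f t ≤ (v - u) * (f u + f v) / 2 := by
  have hvu : (0:ℝ) < v - u := by linarith
  set c : ℝ := (v * f u - u * f v) / (v - u) with hc
  set d : ℝ := (f v - f u) / (v - u) with hd
  have heq : ∀ t : ℝ, ((v - t) * f u + (t - u) * f v) / (v - u) = c + d * t := by
    intro t; rw [hc, hd]; field_simp; ring
  have h1 : ∫ t in u..v, f t ≤ ∫ t in u..v, (c + d * t) := by
    apply intervalIntegral.integral_mono_on huv.le hint
    · exact (Continuous.intervalIntegrable (by continuity) _ _)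
    · intro t ht
      rw [← heq t]; exact hchord t ht
  have h2 : ∫ t in u..v, (c + d * t) = (v - u) * (f u + f v) / 2 := by
    rw [intervalIntegral.integral_add intervalIntegrable_const
      (IntervalIntegrable.const_mul intervalIntegrable_id d),
      intervalIntegral.integral_const, intervalIntegral.integral_const_mul, integral_id,
      hc, hd]
    simp only [smul_eq_mul]
    field_simp
    ring
  linarith

/-- **Lower bound at a point of differentiability** (Corollary 2): for a convex
`f : [a,b] → ℝ` differentiable at `x ∈ (a,b)` with derivative `fd`,
`(b−a)((a+b)/2 − x) f′(x) ≤ (x−a)f(a) + (b−x)f(b) − ∫_a^b f`. -/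
theorem trapezoid_convex_lower_bound_differentiable
    (a b : ℝ) (hab : a < b) (f : ℝ → ℝ)
    (hf : ConvexOn ℝ (Set.Icc a b) f)
    (x : ℝ) (hx : x ∈ Set.Ioo a b) (fd : ℝ)
    (hfd : HasDerivAt f fd x) :
    (b - a) * ((a + b) / 2 - x) * fd ≤
      (x - a) * f a + (b - x) * f b - ∫ t in a..b, f t := by
  obtain ⟨hax, hxb⟩ := hx
  have hxab : x ∈ Set.Icc a b := ⟨hax.le, hxb.le⟩
  have ha : a ∈ Set.Icc a b := ⟨le_rfl, hab.le⟩
  have hb : b ∈ Set.Icc a b := ⟨hab.le, le_rfl⟩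
  -- tangent line lies below f on [a,b]
  have tangent : ∀ t ∈ Set.Icc a b, f x + fd * (t - x) ≤ f t := by
    intro t ht
    rcases lt_trichotomy t x with h | h | h
    · have hs := hf.slope_le_of_hasDerivAt ht hxab h hfd
      rw [slope_def_field] at hs
      have hpos : 0 < x - t := by linarith
      rw [div_le_iff₀ hpos] at hs
      nlinarith
    · simp [h]
    · have hs := hf.le_slope_of_hasDerivAt hxab ht h hfd
      rw [slope_def_field] at hs
      have hpos : 0 < t - x := by linarith
      rw [le_div_iff₀ hpos] at hs
      nlinarith
  -- f is bounded on (a,b)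
  set C : ℝ := |f a| + |f b| + |f x| + |fd| * (b - a) with hC
  have hbound : ∀ t ∈ Set.Ioo a b, ‖f t‖ ≤ C := by
    intro t ht
    have htab : t ∈ Set.Icc a b := Ioo_subset_Icc_self ht
    have hub : f t ≤ max (f a) (f b) := by
      apply hf.le_on_segment ha hb
      rw [segment_eq_Icc hab.le]; exact htab
    have hlb := tangent t htab
    have h1 : |fd * (t - x)| ≤ |fd| * (b - a) := by
      rw [abs_mul]
      have : |t - x| ≤ b - a := by
        rw [abs_le]; constructor <;> [linarith [htab.1, hxab.2]; linarith [htab.2, hxab.1]]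
      exact mul_le_mul_of_nonneg_left this (abs_nonneg _)
    have hfd0 : 0 ≤ |fd| * (b - a) := mul_nonneg (abs_nonneg _) (by linarith)
    rw [Real.norm_eq_abs, abs_le]
    obtain ⟨h1a, h1b⟩ := abs_le.mp h1
    constructor
    · have := neg_abs_le (f x)
      simp only [hC]
      linarith [abs_nonneg (f a), abs_nonneg (f b)]
    · rcases max_cases (f a) (f b) with ⟨he, _⟩ | ⟨he, _⟩ <;> rw [he] at hub
      · simp only [hC]
        linarith [le_abs_self (f a), abs_nonneg (f b), abs_nonneg (f x)]
      · simp only [hC]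
        linarith [le_abs_self (f b), abs_nonneg (f a), abs_nonneg (f x)]
  -- f is interval integrable on [a,b]
  have hint : IntervalIntegrable f volume a b := by
    rw [intervalIntegrable_iff_integrableOn_Ioc_of_le hab.le]
    have hIoo : IntegrableOn f (Set.Ioo a b) volume := by
      have hcont : ContinuousOn f (Set.Ioo a b) := by
        have := hf.continuousOn_interior
        rwa [interior_Icc] at this
      refine ⟨(hcont.aemeasurable measurableSet_Ioo).aestronglyMeasurable, ?_⟩
      refine HasFiniteIntegral.restrict_of_bounded (C := C) measure_Ioo_lt_top ?_
      rw [ae_restrict_iff' measurableSet_Ioo]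
      exact ae_of_all _ hbound
    exact hIoo.congr_set_ae Ioo_ae_eq_Ioc.symm
  have hint1 : IntervalIntegrable f volume a x :=
    hint.mono_set (by
      rw [Set.uIcc_of_le hax.le, Set.uIcc_of_le hab.le]
      exact Set.Icc_subset_Icc le_rfl hxb.le)
  have hint2 : IntervalIntegrable f volume x b :=
    hint.mono_set (by
      rw [Set.uIcc_of_le hxb.le, Set.uIcc_of_le hab.le]
      exact Set.Icc_subset_Icc hax.le le_rfl)
  -- chord bounds on subintervals
  have chord : ∀ u v : ℝ, u ∈ Set.Icc a b → v ∈ Set.Icc a b → u < v →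
      ∀ t ∈ Set.Icc u v, f t ≤ ((v - t) * f u + (t - u) * f v) / (v - u) := by
    intro u v hu hv huv t ht
    have hvu : (0:ℝ) < v - u := by linarith
    have h := hf.2 hu hv (show (0:ℝ) ≤ (v - t) / (v - u) by
        apply div_nonneg _ hvu.le; linarith [ht.2])
      (show (0:ℝ) ≤ (t - u) / (v - u) by
        apply div_nonneg _ hvu.le; linarith [ht.1])
      (show (v - t) / (v - u) + (t - u) / (v - u) = 1 by field_simp; ring)
    simp only [smul_eq_mul] at h
    have hcomb : (v - t) / (v - u) * u + (t - u) / (v - u) * v = t := by field_simp; ring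
    rw [hcomb] at h
    calc f t ≤ (v - t) / (v - u) * f u + (t - u) / (v - u) * f v := h
      _ = ((v - t) * f u + (t - u) * f v) / (v - u) := by field_simp
  have I1 : ∫ t in a..x, f t ≤ (x - a) * (f a + f x) / 2 :=
    integral_le_trapezoid_aux f a x hax
      (chord a x ha hxab hax) hint1
  have I2 : ∫ t in x..b, f t ≤ (b - x) * (f x + f b) / 2 :=
    integral_le_trapezoid_aux f x b hxb
      (chord x b hxab hb hxb) hint2
  have hsplit : ∫ t in a..b, f t = (∫ t in a..x, f t) + ∫ t in x..b, f t :=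
    (intervalIntegral.integral_add_adjacent_intervals hint1 hint2).symm
  -- tangent at the endpoints
  have ta := tangent a ha
  have tb := tangent b hb
  have p1 : 0 ≤ (x - a) * (f a - (f x + fd * (a - x))) :=
    mul_nonneg (by linarith) (by linarith)
  have p2 : 0 ≤ (b - x) * (f b - (f x + fd * (b - x))) :=
    mul_nonneg (by linarith) (by linarith)
  nlinarith [p1, p2, I1, I2, hsplit]
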